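/- Let L > 0 and let (x_i, g_i, f_i)_{i∈I} be a finite family in E × E × ℝ. The family is F_{0,L}-interpolable if and only if for every η > 0 there exists a nonempty closed convex (η²L)-smooth set C ⊆ E × ℝ such that for every i ∈ I, the point (x_i/η, f_i) belongs to C and the vector (η·g_i, −1) belongs to N_C((x_i/η, f_i)). -/

import Mathlib

open Metric Set
open scoped RealInnerProductSpace Pointwise

set_option maxHeartbeats 1000000

noncomputable section

variable {F : Type*} [NormedAddCommGroup F] [InnerProductSpace ℝ F]

/-- The normal cone of a set `C` at a point `z`. -/
def normalCone (C : Set F) (z : F) : Set F :=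
  {v | ∀ x ∈ C, ⟪v, x - z⟫ ≤ 0}

/-- A set `C` is `β`-smooth if at every boundary point `z`, every unit normal vector `n`
gives a closed ball of radius `1/β` centered at `z - (1/β) n` contained in `C`. -/
def IsSmoothSet (β : ℝ) (C : Set F) : Prop :=
  ∀ z ∈ frontier C, ∀ n ∈ normalCone C z, ‖n‖ = 1 →
    closedBall (z - (1 / β) • n) (1 / β) ⊆ C

/-- `g` is a subgradient of `f` at `x`. -/
def IsSubgradientOf {d : ℕ} (f : EuclideanSpace ℝ (Fin d) → ℝ)
    (g x : EuclideanSpace ℝ (Fin d)) : Prop :=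
  ∀ u, f x + ⟪g, u - x⟫ ≤ f u

/-- The class `F_{μ,L}` of `μ`-strongly convex, `L`-smooth convex functions. -/
def MemFclass {d : ℕ} (μ L : ℝ) (f : EuclideanSpace ℝ (Fin d) → ℝ) : Prop :=
  ConvexOn ℝ Set.univ f ∧
  ∀ x y g, IsSubgradientOf f g x →
    f y ≤ f x + ⟪g, y - x⟫ + L / 2 * ‖y - x‖ ^ 2 ∧
    f x + ⟪g, y - x⟫ + μ / 2 * ‖y - x‖ ^ 2 ≤ f y

/-- A family `(x_i, g_i, f_i)` is `F_{μ,L}`-interpolable. -/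
def FInterpolable {d : ℕ} {ι : Type*} (μ L : ℝ) (x g : ι → EuclideanSpace ℝ (Fin d))
    (fv : ι → ℝ) : Prop :=
  ∃ f : EuclideanSpace ℝ (Fin d) → ℝ, MemFclass μ L f ∧
    ∀ i, f (x i) = fv i ∧ IsSubgradientOf f (g i) (x i)

lemma keyIneqFwd (η L a b t D A : ℝ) (hη : 0 < η) (hL : 0 < L) (ha : 0 ≤ a) (hb : 0 ≤ b)
    (hD0 : 0 ≤ D) (hD : D = a + b - 2*t) (hA : A ≤ -D/(2*L)) :
    A ≤ 1/(η^2*L) * ((1+η^2*t)/Real.sqrt (1+η^2*b) - Real.sqrt (1+η^2*a)) := by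
  set si := Real.sqrt (1+η^2*a) with hsi
  set sj := Real.sqrt (1+η^2*b) with hsj
  have hsi2 : si^2 = 1+η^2*a := Real.sq_sqrt (by positivity)
  have hsj2 : sj^2 = 1+η^2*b := Real.sq_sqrt (by positivity)
  have hsi0 : 0 ≤ si := Real.sqrt_nonneg _
  have hsj0 : 0 ≤ sj := Real.sqrt_nonneg _
  have hη2 : 0 ≤ η^2 := sq_nonneg η
  have hsi1 : 1 ≤ si := by nlinarith
  have hsj1 : 1 ≤ sj := by nlinarith
  have h1 : si*sj - η^2*D/2*sj ≤ 1+η^2*t := by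
    nlinarith [sq_nonneg (si - sj), mul_nonneg hD0 (sub_nonneg.2 hsj1)]
  have hsjpos : 0 < sj := by linarith
  have h2 : -(η^2*D/2) ≤ (1+η^2*t)/sj - si := by
    rw [le_sub_iff_add_le, le_div_iff₀ hsjpos]
    nlinarith [h1]
  have h3 : -D/(2*L) = 1/(η^2*L) * (-(η^2*D/2)) := by field_simp
  calc A ≤ -D/(2*L) := hA
    _ = 1/(η^2*L) * (-(η^2*D/2)) := h3
    _ ≤ _ := by apply mul_le_mul_of_nonneg_left h2 (by positivity)

lemma keyLimit (L a b t A : ℝ) (hL : 0 < L) (ha : 0 ≤ a) (hb : 0 ≤ b)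
    (h : ∀ u : ℝ, 0 < u → A ≤ 1/(u*L) * ((1+u*t)/Real.sqrt (1+u*b) - Real.sqrt (1+u*a))) :
    A ≤ (2*t - a - b)/(2*L) := by
  set G : ℝ → ℝ := fun u => (2*t - a - b + u*(t^2 - a*b)) /
      (Real.sqrt (1+u*b) * ((1+u*t) + Real.sqrt ((1+u*a)*(1+u*b)))) with hG
  have hcont : ContinuousAt G 0 := by
    apply ContinuousAt.div
    · fun_prop
    · apply ContinuousAt.mul
      · exact (Real.continuous_sqrt.continuousAt).comp (by fun_prop)
      · apply ContinuousAt.add (by fun_prop)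
        exact (Real.continuous_sqrt.continuousAt).comp (by fun_prop)
    · norm_num
  have hG0 : G 0 = (2*t - a - b)/2 := by simp [hG]; norm_num
  have hev : ∀ᶠ u in nhdsWithin 0 (Set.Ioi 0), L*A ≤ G u := by
    have hmem : Set.Ioo (0:ℝ) (1/(1+|t|)) ∈ nhdsWithin 0 (Set.Ioi 0) := by
      apply Ioo_mem_nhdsGT_of_mem
      exact ⟨le_refl _, by positivity⟩
    filter_upwards [hmem] with u hu
    obtain ⟨hu0, hu1⟩ := hu
    have habs : 0 < 1 + |t| := by positivity
    have h1 : u * (1+|t|) < 1 := by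
      have := mul_lt_mul_of_pos_right hu1 habs
      rwa [one_div_mul_cancel (ne_of_gt habs)] at this
    have hut : 0 < 1 + u*t := by
      nlinarith [mul_le_mul_of_nonneg_left (neg_abs_le t) hu0.le]
    set si := Real.sqrt (1+u*a) with hsi
    set sj := Real.sqrt (1+u*b) with hsj
    have hsi2 : si^2 = 1+u*a := Real.sq_sqrt (by nlinarith)
    have hsj2 : sj^2 = 1+u*b := Real.sq_sqrt (by nlinarith)
    have hsi0 : 0 ≤ si := Real.sqrt_nonneg _
    have hsj0 : 0 ≤ sj := Real.sqrt_nonneg _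
    have hsi1 : 1 ≤ si := by nlinarith
    have hsj1 : 1 ≤ sj := by nlinarith
    have hsjne : sj ≠ 0 := by intro hh; rw [hh] at hsj1; norm_num at hsj1
    have hmul : Real.sqrt ((1+u*a)*(1+u*b)) = si*sj := Real.sqrt_mul (by nlinarith) _
    have key := h u hu0
    have hfac : ((1+u*t) - si*sj) * ((1+u*t) + si*sj) = u*(2*t-a-b+u*(t^2-a*b)) := by
      linear_combination (-(sj^2)) * hsi2 - (1+u*a) * hsj2
    have hden : (0:ℝ) < sj * ((1+u*t) + si*sj) := by nlinarith
    have hXeq : (1+u*t)/sj - si = u * G u := by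
      rw [hG]
      simp only
      rw [hmul, ← mul_div_assoc]
      rw [div_sub' hsjne, div_eq_div_iff hsjne (ne_of_gt hden)]
      linear_combination sj * hfac
    have h2 : u*(L*A) ≤ u * G u := by
      calc u*(L*A) = (u*L)*A := by ring
        _ ≤ (u*L) * (1/(u*L) * ((1+u*t)/sj - si)) := by
            apply mul_le_mul_of_nonneg_left key (by positivity)
        _ = (1+u*t)/sj - si := by
            field_simp
            try ring
        _ = u * G u := hXeq
    exact le_of_mul_le_mul_left h2 hu0
  have htend : Filter.Tendsto G (nhdsWithin 0 (Set.Ioi 0)) (nhds (G 0)) :=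
    hcont.tendsto.mono_left nhdsWithin_le_nhds
  have hfin : L*A ≤ G 0 := ge_of_tendsto htend hev
  rw [hG0] at hfin
  rw [le_div_iff₀ (by positivity : (0:ℝ) < 2*L)]
  linarith

lemma amgm {L : ℝ} (hL : 0 < L) (y v : F) : ⟪y, v⟫ ≤ 1/(2*L)*‖v‖^2 + L/2*‖y‖^2 := by
  have h1 : ‖L•y - v‖^2 = ‖L•y‖^2 - 2*⟪L•y,v⟫ + ‖v‖^2 := norm_sub_sq_real _ _
  have h2 : ‖L•y‖ = L*‖y‖ := by rw [norm_smul, Real.norm_of_nonneg hL.le]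
  have h3 : ⟪L•y,v⟫ = L*⟪y,v⟫ := real_inner_smul_left _ _ _
  have h4 : 0 ≤ ‖L•y - v‖^2 := sq_nonneg _
  rw [h1, h2, h3] at h4
  have h7 : 1/(2*L)*‖v‖^2 + L/2*‖y‖^2 - ⟪y,v⟫ = (1/(2*L)) * ((L*‖y‖)^2 - 2*(L*⟪y,v⟫) + ‖v‖^2) := by
    field_simp; ring
  have h8 : (0:ℝ) ≤ (1/(2*L)) * ((L*‖y‖)^2 - 2*(L*⟪y,v⟫) + ‖v‖^2) :=
    mul_nonneg (by positivity) h4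
  linarith [h7 ▸ h8]

lemma isSmoothSet_add_closedBall (K : Set F) {β : ℝ} (hβ : 0 < β)
    (hcl : IsClosed (K + closedBall (0:F) (1/β))) :
    IsSmoothSet β (K + closedBall (0:F) (1/β)) := by
  intro z hz n hn hn1
  have hzC : z ∈ K + closedBall (0:F) (1/β) := by
    have := hz.1
    rwa [hcl.closure_eq] at this
  obtain ⟨k, hk, b, hb, hkb⟩ := hzC
  have hkb' : k + b = z := hkb
  have hmem2 : k + (1/β) • n ∈ K + closedBall (0:F) (1/β) := by
    refine ⟨k, hk, (1/β) • n, ?_, rfl⟩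
    simp only [mem_closedBall, dist_eq_norm, sub_zero, norm_smul, hn1, mul_one]
    rw [Real.norm_of_nonneg (by positivity)]
  have hnorm := hn _ hmem2
  have hinner : ⟪n, (k + (1/β) • n) - z⟫ = ⟪n, k - z⟫ + 1/β := by
    rw [show (k + (1/β) • n) - z = (k - z) + (1/β) • n by abel]
    rw [inner_add_right, real_inner_smul_right, real_inner_self_eq_norm_sq, hn1]
    ring
  rw [hinner] at hnorm
  have hkz : k - z = -b := by rw [← hkb']; abel
  have hnb : 1/β ≤ ⟪n, b⟫ := by
    rw [hkz, inner_neg_right] at hnorm; linarith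
  have hble : ‖b‖ ≤ 1/β := by simpa [mem_closedBall, dist_eq_norm] using hb
  have hcs : ⟪n, b⟫ ≤ ‖b‖ := by
    calc ⟪n, b⟫ ≤ ‖n‖ * ‖b‖ := real_inner_le_norm _ _
      _ = ‖b‖ := by rw [hn1, one_mul]
  have hbnorm : ‖b‖ = 1/β := le_antisymm hble (le_trans hnb hcs)
  have heq : ⟪n, b⟫ = ‖n‖ * ‖b‖ := by
    rw [hn1, one_mul]; exact le_antisymm hcs (by rw [hbnorm] at *; linarith)
  have hbn : b = (1/β) • n := by
    rw [inner_eq_norm_mul_iff_real] at heq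
    rw [hn1, one_smul] at heq
    rw [← heq, hbnorm]
  have hcenter : z - (1/β) • n = k := by rw [← hkb', hbn]; abel
  rw [hcenter]
  intro w hw
  refine ⟨k, hk, w - k, ?_, by show k + (w - k) = w; abel⟩
  simpa [mem_closedBall, dist_eq_norm] using hw

section Helpers
variable {d : ℕ}

lemma pdInner (a b : WithLp 2 (EuclideanSpace ℝ (Fin d) × ℝ)) :
    ⟪a, b⟫ = ⟪a.fst, b.fst⟫ + a.snd * b.snd := by
  rw [WithLp.prod_inner_apply]; norm_num [RCLike.inner_apply]; ring

lemma pdNormSq (a : WithLp 2 (EuclideanSpace ℝ (Fin d) × ℝ)) :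
    ‖a‖^2 = ‖a.fst‖^2 + a.snd^2 := by
  rw [WithLp.prod_norm_sq_eq_of_L2, Real.norm_eq_abs, sq_abs]

lemma inner_vz_eq {η : ℝ} (hη : η ≠ 0) (a b : EuclideanSpace ℝ (Fin d)) (s : ℝ) :
    ⟪(WithLp.equiv 2 (EuclideanSpace ℝ (Fin d) × ℝ)).symm (η • a, (-1:ℝ)),
      (WithLp.equiv 2 (EuclideanSpace ℝ (Fin d) × ℝ)).symm (η⁻¹ • b, s)⟫ = ⟪a, b⟫ - s := by
  rw [pdInner]
  show ⟪η • a, η⁻¹ • b⟫ + (-1) * s = ⟪a, b⟫ - s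
  rw [real_inner_smul_left, real_inner_smul_right, ← mul_assoc, mul_inv_cancel₀ hη]
  ring

lemma inner_vv_eq (η : ℝ) (a b : EuclideanSpace ℝ (Fin d)) :
    ⟪(WithLp.equiv 2 (EuclideanSpace ℝ (Fin d) × ℝ)).symm (η • a, (-1:ℝ)),
      (WithLp.equiv 2 (EuclideanSpace ℝ (Fin d) × ℝ)).symm (η • b, (-1:ℝ))⟫
      = 1 + η^2*⟪a, b⟫ := by
  rw [pdInner]
  show ⟪η • a, η • b⟫ + (-1) * (-1) = 1 + η^2*⟪a, b⟫
  rw [real_inner_smul_left, real_inner_smul_right]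
  ring

lemma norm_v_eq {η : ℝ} (hη : 0 ≤ η) (a : EuclideanSpace ℝ (Fin d)) :
    ‖(WithLp.equiv 2 (EuclideanSpace ℝ (Fin d) × ℝ)).symm (η • a, (-1:ℝ))‖
      = Real.sqrt (1 + η^2*‖a‖^2) := by
  have h1 : ‖(WithLp.equiv 2 (EuclideanSpace ℝ (Fin d) × ℝ)).symm (η • a, (-1:ℝ))‖^2
      = 1 + η^2*‖a‖^2 := by
    rw [pdNormSq]
    show ‖η • a‖^2 + ((-1:ℝ))^2 = 1 + η^2*‖a‖^2
    rw [norm_smul, Real.norm_of_nonneg hη]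
    ring
  rw [← h1, Real.sqrt_sq (norm_nonneg _)]

lemma norm_v_pos {η : ℝ} (hη : 0 ≤ η) (a : EuclideanSpace ℝ (Fin d)) :
    0 < ‖(WithLp.equiv 2 (EuclideanSpace ℝ (Fin d) × ℝ)).symm (η • a, (-1:ℝ))‖ := by
  rw [norm_v_eq hη]
  apply Real.sqrt_pos.2
  positivity

lemma v_ne_zero {η : ℝ} (hη : 0 ≤ η) (a : EuclideanSpace ℝ (Fin d)) :
    (WithLp.equiv 2 (EuclideanSpace ℝ (Fin d) × ℝ)).symm (η • a, (-1:ℝ)) ≠ 0 :=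
  norm_ne_zero_iff.1 (ne_of_gt (norm_v_pos hη a))

end Helpers

lemma interp_of_pc {d : ℕ} {ι : Type*} [Fintype ι] [Nonempty ι] {L : ℝ}
    {x g : ι → EuclideanSpace ℝ (Fin d)} {fv : ι → ℝ} (hL : 0 < L)
    (hp : ∀ i j, fv i + ⟪g i, x j - x i⟫ + ‖g i - g j‖^2/(2*L) ≤ fv j) :
    FInterpolable 0 L x g fv := by
  classical
  set sl : ι → EuclideanSpace ℝ (Fin d) := fun i => g i - L • x i with hsl
  set c : ι → ℝ := fun i => fv i - ⟪g i, x i⟫ + L/2*‖x i‖^2 with hc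
  set q : ι → EuclideanSpace ℝ (Fin d) → ℝ := fun i s => 1/(2*L)*‖s - sl i‖^2 - c i with hq
  set h : EuclideanSpace ℝ (Fin d) → ℝ :=
    fun s => Finset.univ.sup' Finset.univ_nonempty (fun i => q i s) with hh
  have hq_le_h : ∀ i s, q i s ≤ h s := by
    intro i s
    simp only [hh]
    exact Finset.le_sup' (fun j => q j s) (Finset.mem_univ i)
  have h_exists : ∀ s, ∃ i, h s = q i s := by
    intro s
    obtain ⟨i, _, hi⟩ := Finset.exists_mem_eq_sup' Finset.univ_nonempty (fun i => q i s)
    exact ⟨i, hi⟩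
  set f : EuclideanSpace ℝ (Fin d) → ℝ :=
    fun y => sSup (Set.range fun s => ⟪y, s⟫ - h s) with hf
  have i0 : ι := Classical.arbitrary ι
  have hbdd' : ∀ y, BddAbove (Set.range fun s => ⟪y, s⟫ - h s) := by
    intro y
    refine ⟨⟪y, sl i0⟫ + L/2*‖y‖^2 + c i0, ?_⟩
    rintro r ⟨s, rfl⟩
    have h1 : q i0 s ≤ h s := hq_le_h i0 s
    have h2 : ⟪y, s - sl i0⟫ ≤ 1/(2*L)*‖s - sl i0‖^2 + L/2*‖y‖^2 := amgm hL _ _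
    have h3 : ⟪y, s⟫ = ⟪y, s - sl i0⟫ + ⟪y, sl i0⟫ := by
      rw [inner_sub_right]; ring
    simp only [hq] at h1
    simp only
    linarith
  have hne : ∀ y, (Set.range fun s => ⟪y, s⟫ - h s).Nonempty :=
    fun y => Set.range_nonempty _
  have hfge : ∀ y s, ⟪y, s⟫ - h s ≤ f y := fun y s => le_csSup (hbdd' y) ⟨s, rfl⟩
  have hfle : ∀ y B, (∀ s, ⟪y, s⟫ - h s ≤ B) → f y ≤ B := fun y B hB =>
    csSup_le (hne y) (by rintro r ⟨s, rfl⟩; exact hB s)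
  -- value of h at g j
  have hqg : ∀ i j, q i (g j) = ‖g j - g i‖^2/(2*L) + ⟪g j, x i⟫ - fv i := by
    intro i j
    have hexp : ‖g j - sl i‖^2 = ‖g j - g i‖^2 + 2*L*⟪g j - g i, x i⟫ + L^2*‖x i‖^2 := by
      rw [show g j - sl i = (g j - g i) + L•(x i) by simp only [hsl]; abel]
      rw [norm_add_sq_real, real_inner_smul_right, norm_smul, Real.norm_of_nonneg hL.le]
      ring
    have hgi : ⟪g j - g i, x i⟫ = ⟪g j, x i⟫ - ⟪g i, x i⟫ := by rw [inner_sub_left]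
    simp only [hq, hc]
    rw [hexp, hgi]
    field_simp
    ring
  have hg_eq : ∀ j, h (g j) = ⟪g j, x j⟫ - fv j := by
    intro j
    apply le_antisymm
    · apply Finset.sup'_le
      intro i _
      rw [hqg i j]
      have := hp j i
      have hsr : ⟪g j, x i - x j⟫ = ⟪g j, x i⟫ - ⟪g j, x j⟫ := by rw [inner_sub_right]
      have hnrm : ‖g j - g i‖ = ‖g i - g j‖ := norm_sub_rev _ _
      rw [hsr, hnrm] at this
      rw [hnrm]
      linarith
    · have := hq_le_h j (g j)
      rw [hqg j j] at this
      simpa using this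
  -- f (x j) = fv j
  have hfxj : ∀ j, f (x j) = fv j := by
    intro j
    apply le_antisymm
    · apply hfle
      intro s
      have h1 : q j s ≤ h s := hq_le_h j s
      have h2 : ⟪x j, s - sl j⟫ ≤ 1/(2*L)*‖s - sl j‖^2 + L/2*‖x j‖^2 := amgm hL _ _
      have h3 : ⟪x j, s⟫ = ⟪x j, s - sl j⟫ + ⟪x j, sl j⟫ := by rw [inner_sub_right]; ring
      have h4 : ⟪x j, sl j⟫ = ⟪x j, g j⟫ - L*‖x j‖^2 := by
        simp only [hsl]
        rw [inner_sub_right, real_inner_smul_right, real_inner_self_eq_norm_sq]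
      have h5 : ⟪x j, g j⟫ = ⟪g j, x j⟫ := real_inner_comm _ _
      simp only [hq, hc] at h1
      linarith
    · have := hfge (x j) (g j)
      rw [hg_eq j, real_inner_comm (x j) (g j)] at this
      linarith
  -- g j is subgradient at x j
  have hsubj : ∀ j, IsSubgradientOf f (g j) (x j) := by
    intro j u
    have h1 := hfge u (g j)
    rw [hg_eq j] at h1
    have h2 : ⟪g j, u - x j⟫ = ⟪g j, u⟫ - ⟪g j, x j⟫ := by rw [inner_sub_right]
    have h3 : ⟪u, g j⟫ = ⟪g j, u⟫ := real_inner_comm _ _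
    rw [hfxj j, h2]
    linarith
  -- convexity
  have hconv : ConvexOn ℝ Set.univ f := by
    refine ⟨convex_univ, ?_⟩
    intro p _ r _ wa wb hwa hwb hw
    apply hfle
    intro s
    have h1 := hfge p s
    have h2 := hfge r s
    have h3 : ⟪wa•p + wb•r, s⟫ = wa*⟪p,s⟫ + wb*⟪r,s⟫ := by
      rw [inner_add_left, real_inner_smul_left, real_inner_smul_left]
    have h4 : wa * (⟪p,s⟫ - h s) + wb * (⟪r,s⟫ - h s) ≤ wa * f p + wb * f r :=
      add_le_add (mul_le_mul_of_nonneg_left h1 hwa) (mul_le_mul_of_nonneg_left h2 hwb)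
    have h5 : wa * (⟪p,s⟫ - h s) + wb * (⟪r,s⟫ - h s) = wa*⟪p,s⟫ + wb*⟪r,s⟫ - h s := by
      linear_combination (-(h s)) * hw
    rw [h3, smul_eq_mul, smul_eq_mul]
    linarith
  -- strong convexity upgrade for h
  have hstrong : ∀ (xx gg : EuclideanSpace ℝ (Fin d)),
      (∀ s, h gg + ⟪xx, s - gg⟫ ≤ h s) →
      ∀ s, h gg + ⟪xx, s - gg⟫ + 1/(2*L)*‖s - gg‖^2 ≤ h s := by
    intro xx gg hsub s
    rcases eq_or_ne s gg with rfl | hnes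
    · simp
    have hsgpos : 0 < ‖s - gg‖^2 := by
      have hne0 : s - gg ≠ 0 := sub_ne_zero.2 hnes
      exact pow_pos (norm_pos_iff.2 hne0) 2
    have hT : ∀ t : ℝ, 0 < t → t ≤ 1 →
        h gg + ⟪xx, s - gg⟫ + 1/(2*L)*‖s-gg‖^2 ≤ h s + t*(1/(2*L)*‖s-gg‖^2) := by
      intro t ht0 ht1
      set p := gg + t•(s - gg) with hdefp
      obtain ⟨k, hk⟩ := h_exists p
      have hqA : ∀ u, q k u = 1/(2*L)*‖u‖^2 - (1/L)*⟪sl k, u⟫ + (‖sl k‖^2/(2*L) - c k) := by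
        intro u
        have he : ‖u - sl k‖^2 = ‖u‖^2 - 2*⟪u, sl k⟫ + ‖sl k‖^2 := norm_sub_sq_real _ _
        have hcm : ⟪u, sl k⟫ = ⟪sl k, u⟫ := real_inner_comm _ _
        simp only [hq]
        rw [he, hcm]
        field_simp
        ring
      have hsub_p := hsub p
      have hq_s := hq_le_h k s
      have hq_g := hq_le_h k gg
      rw [hqA s] at hq_s
      rw [hqA gg] at hq_g
      rw [hk, hqA p] at hsub_p
      have hpg : p - gg = t•(s-gg) := by rw [hdefp]; abel
      have hip : ⟪xx, p - gg⟫ = t*⟪xx, s - gg⟫ := by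
        rw [hpg]; exact real_inner_smul_right _ _ _
      have hslp : ⟪sl k, p⟫ = (1-t)*⟪sl k, gg⟫ + t*⟪sl k, s⟫ := by
        rw [hdefp, inner_add_right, real_inner_smul_right, inner_sub_right]; ring
      have hnp : ‖p‖^2 = ‖gg‖^2 + 2*t*⟪gg, s-gg⟫ + t^2*‖s-gg‖^2 := by
        rw [hdefp, norm_add_sq_real, real_inner_smul_right, norm_smul,
          Real.norm_of_nonneg ht0.le]
        ring
      have hgs : ⟪gg, s - gg⟫ = ⟪gg, s⟫ - ‖gg‖^2 := by
        rw [inner_sub_right, real_inner_self_eq_norm_sq]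
      have hss : ‖s - gg‖^2 = ‖s‖^2 - 2*⟪gg,s⟫ + ‖gg‖^2 := by
        rw [norm_sub_sq_real, real_inner_comm]
      rw [hip, hslp, hnp] at hsub_p
      have h1t : (0:ℝ) ≤ 1 - t := by linarith
      have e1 := mul_le_mul_of_nonneg_left hq_g h1t
      have e2 := mul_le_mul_of_nonneg_left hq_s ht0.le
      have hss_t : 1/(2*L)*(t*‖s-gg‖^2) = 1/(2*L)*(t*(‖s‖^2 - 2*⟪gg,s⟫ + ‖gg‖^2)) := by
        rw [hss]
      have hss_t2 : 1/(2*L)*(t^2*‖s-gg‖^2) = 1/(2*L)*(t^2*(‖s‖^2 - 2*⟪gg,s⟫ + ‖gg‖^2)) := by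
        rw [hss]
      have hgs_t : 1/(2*L)*(2*t*⟪gg, s - gg⟫) = 1/(2*L)*(2*t*(⟪gg, s⟫ - ‖gg‖^2)) := by
        rw [hgs]
      have goal_t : t * (h gg + ⟪xx, s - gg⟫ + 1/(2*L)*‖s-gg‖^2) ≤
          t * (h s + t*(1/(2*L)*‖s-gg‖^2)) := by
        nlinarith [hsub_p, e1, e2, hss_t, hss_t2, hgs_t]
      exact le_of_mul_le_mul_left goal_t ht0
    apply le_of_forall_pos_le_add
    intro ε hε
    set m := 1/(2*L)*‖s-gg‖^2 with hm
    have hmpos : 0 < m := by positivity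
    set t := min 1 (ε/m) with ht
    have ht0 : 0 < t := lt_min one_pos (by positivity)
    have ht1 : t ≤ 1 := min_le_left _ _
    have htm : t*m ≤ ε := by
      have : t ≤ ε/m := min_le_right _ _
      calc t*m ≤ (ε/m)*m := mul_le_mul_of_nonneg_right this hmpos.le
        _ = ε := by field_simp
    have := hT t ht0 ht1
    linarith
  -- Fenchel equality
  have hfen : ∀ (xx gg : EuclideanSpace ℝ (Fin d)), IsSubgradientOf f gg xx →
      f xx = ⟪gg, xx⟫ - h gg := by
    intro xx gg hsub
    obtain ⟨k, hk⟩ := h_exists gg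
    set p := (1/L) • (gg - sl k) with hdefp
    have h1 := hsub p
    have h2 : f p ≤ ⟪gg, p⟫ - h gg := by
      apply hfle
      intro s
      have h3 := hq_le_h k s
      have hexp : ‖s - sl k‖^2 = ‖s - gg‖^2 + 2*⟪gg - sl k, s - gg⟫ + ‖gg - sl k‖^2 := by
        rw [show s - sl k = (s - gg) + (gg - sl k) by abel, norm_add_sq_real,
          real_inner_comm]
      have hps : ⟪p, s⟫ - ⟪p, gg⟫ = (1/L)*⟪gg - sl k, s - gg⟫ := by
        rw [hdefp, real_inner_smul_left, real_inner_smul_left, ← mul_sub, ← inner_sub_right]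
      have hpgg : ⟪gg, p⟫ = ⟪p, gg⟫ := real_inner_comm _ _
      rw [hk]
      simp only [hq] at h3 ⊢
      have hsq : (0:ℝ) ≤ ‖s - gg‖^2 := sq_nonneg _
      have hLpos : (0:ℝ) < 1/(2*L) := by positivity
      have hexp_s : 1/(2*L)*‖s - sl k‖^2
          = 1/(2*L)*(‖s - gg‖^2 + 2*⟪gg - sl k, s - gg⟫ + ‖gg - sl k‖^2) := by rw [hexp]
      have hpos2 : 1/(2*L)*0 ≤ 1/(2*L)*‖s - gg‖^2 := mul_le_mul_of_nonneg_left hsq hLpos.le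
      have hps2 : 1/(2*L)*⟪gg - sl k, s - gg⟫ + 1/(2*L)*⟪gg - sl k, s - gg⟫
          = ⟪p, s⟫ - ⟪p, gg⟫ := by
        rw [hps]; field_simp; ring
      linarith [h3, hexp_s, hpos2, hps2, hpgg]
    have h4 : ⟪gg, p - xx⟫ = ⟪gg, p⟫ - ⟪gg, xx⟫ := by rw [inner_sub_right]
    apply le_antisymm
    · rw [h4] at h1; linarith
    · have h5 := hfge xx gg
      have h6 : ⟪xx, gg⟫ = ⟪gg, xx⟫ := real_inner_comm _ _
      linarith
  -- smoothness upper bound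
  have hupper : ∀ xx y gg, IsSubgradientOf f gg xx →
      f y ≤ f xx + ⟪gg, y - xx⟫ + L/2*‖y - xx‖^2 := by
    intro xx y gg hsub
    have hfx := hfen xx gg hsub
    have hlow : ∀ s, h gg + ⟪xx, s - gg⟫ ≤ h s := by
      intro s
      have h1 := hfge xx s
      rw [hfx] at h1
      have hgx : ⟪gg,xx⟫ = ⟪xx,gg⟫ := real_inner_comm _ _
      have h2 : ⟪xx, s - gg⟫ = ⟪xx, s⟫ - ⟪xx, gg⟫ := by rw [inner_sub_right]
      linarith
    have hstr := hstrong xx gg hlow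
    apply hfle
    intro s
    have h1 := hstr s
    have h2 : ⟪y - xx, s - gg⟫ ≤ 1/(2*L)*‖s-gg‖^2 + L/2*‖y-xx‖^2 := amgm hL _ _
    have hid : ⟪y,s⟫ - ⟪xx, s - gg⟫ = ⟪gg,xx⟫ + ⟪gg, y - xx⟫ + ⟪y - xx, s - gg⟫ := by
      simp only [inner_sub_right, inner_sub_left]
      have c1 : ⟪gg,y⟫ = ⟪y,gg⟫ := real_inner_comm _ _
      have c2 : ⟪gg,xx⟫ = ⟪xx,gg⟫ := real_inner_comm _ _
      linarith
    rw [hfx]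
    linarith
  refine ⟨f, ⟨hconv, ?_⟩, fun j => ⟨hfxj j, hsubj j⟩⟩
  intro xx y gg hsub
  refine ⟨hupper xx y gg hsub, ?_⟩
  have hy := hsub y
  have e : (0:ℝ)/2*‖y - xx‖^2 = 0 := by norm_num
  rw [e, add_zero]
  exact hy

lemma pc_of_interp {d : ℕ} {ι : Type*} {L : ℝ} (hL : 0 < L)
    {x g : ι → EuclideanSpace ℝ (Fin d)} {fv : ι → ℝ}
    (h : FInterpolable 0 L x g fv) :
    ∀ i j, fv i + ⟪g i, x j - x i⟫ + ‖g i - g j‖^2/(2*L) ≤ fv j := by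
  obtain ⟨f, ⟨hconv, hsm⟩, hint⟩ := h
  intro i j
  set w : EuclideanSpace ℝ (Fin d) := g j - g i with hw
  set u : EuclideanSpace ℝ (Fin d) := x j - (1/L) • w with hu
  have h1 := (hsm (x j) u (g j) (hint j).2).1
  have h2 := (hint i).2 u
  have e1 : u - x j = -((1/L) • w) := by rw [hu]; abel
  have e2 : ⟪g j, u - x j⟫ = -((1/L)*⟪g j, w⟫) := by
    rw [e1, inner_neg_right, real_inner_smul_right]
  have e3 : ‖u - x j‖^2 = (1/L)^2*‖w‖^2 := by
    rw [e1, norm_neg, norm_smul, Real.norm_of_nonneg (by positivity : (0:ℝ) ≤ 1/L)]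
    ring
  have e4 : ⟪g i, u - x i⟫ = ⟪g i, x j - x i⟫ - (1/L)*⟪g i, w⟫ := by
    rw [hu, show x j - (1/L)•w - x i = (x j - x i) - (1/L)•w by abel, inner_sub_right,
      real_inner_smul_right]
  have e5 : ⟪g j, w⟫ - ⟪g i, w⟫ = ‖w‖^2 := by
    rw [← inner_sub_left, real_inner_self_eq_norm_sq]
  have e5L : (1/L)*⟪g j, w⟫ - (1/L)*⟪g i, w⟫ = (1/L)*‖w‖^2 := by
    rw [← mul_sub, e5]
  have e6 : ‖g i - g j‖ = ‖w‖ := by rw [hw, norm_sub_rev]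
  rw [(hint j).1] at h1
  rw [(hint i).1] at h2
  rw [e2, e3] at h1
  rw [e4] at h2
  rw [e6]
  have e7 : L/2*((1/L)^2*‖w‖^2) = 1/2*((1/L)*‖w‖^2) := by
    field_simp
    try ring
  have e8 : ‖w‖^2/(2*L) = 1/2*((1/L)*‖w‖^2) := by
    field_simp
    try ring
  rw [e8]
  linarith [h1, h2, e5L, e7]

lemma interp_of_isEmpty {d : ℕ} {ι : Type*} [IsEmpty ι] {L : ℝ} (hL : 0 < L)
    (x g : ι → EuclideanSpace ℝ (Fin d)) (fv : ι → ℝ) : FInterpolable 0 L x g fv := by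
  refine ⟨fun _ => 0, ⟨convexOn_const 0 convex_univ, ?_⟩, fun i => isEmptyElim i⟩
  intro xx y gg hsub
  have h1 : (0:ℝ) + ⟪gg, y - xx⟫ ≤ 0 := hsub y
  have h2 : (0:ℝ) + ⟪gg, (xx - (y - xx)) - xx⟫ ≤ 0 := hsub (xx - (y - xx))
  have e2 : (xx - (y - xx)) - xx = -(y - xx) := by abel
  rw [e2, inner_neg_right] at h2
  constructor
  · show (0:ℝ) ≤ 0 + ⟪gg, y - xx⟫ + L/2*‖y - xx‖^2
    have := mul_nonneg (by positivity : (0:ℝ) ≤ L/2) (sq_nonneg ‖y - xx‖)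
    linarith
  · show (0:ℝ) + ⟪gg, y - xx⟫ + 0/2*‖y - xx‖^2 ≤ 0
    have e : (0:ℝ)/2*‖y - xx‖^2 = 0 := by norm_num
    rw [e, add_zero]
    linarith

lemma pc_of_sets {d : ℕ} {ι : Type*} [Fintype ι] {L : ℝ} (hL : 0 < L)
    {x g : ι → EuclideanSpace ℝ (Fin d)} {fv : ι → ℝ}
    (H : ∀ η : ℝ, 0 < η →
      ∃ C : Set (WithLp 2 (EuclideanSpace ℝ (Fin d) × ℝ)), C.Nonempty ∧ IsClosed C ∧
        Convex ℝ C ∧ IsSmoothSet (η ^ 2 * L) C ∧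
        ∀ i, (WithLp.equiv 2 (EuclideanSpace ℝ (Fin d) × ℝ)).symm (η⁻¹ • x i, fv i) ∈ C ∧
          (WithLp.equiv 2 (EuclideanSpace ℝ (Fin d) × ℝ)).symm (η • g i, (-1 : ℝ)) ∈
            normalCone C
              ((WithLp.equiv 2 (EuclideanSpace ℝ (Fin d) × ℝ)).symm (η⁻¹ • x i, fv i))) :
    ∀ i j, fv i + ⟪g i, x j - x i⟫ + ‖g i - g j‖^2/(2*L) ≤ fv j := by
  intro i j
  have hD : ‖g i - g j‖^2 = ‖g i‖^2 + ‖g j‖^2 - 2*⟪g i, g j⟫ := by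
    rw [norm_sub_sq_real]; ring
  have hkey : fv i - fv j + ⟪g i, x j - x i⟫
      ≤ (2*⟪g i, g j⟫ - ‖g i‖^2 - ‖g j‖^2)/(2*L) := by
    apply keyLimit L (‖g i‖^2) (‖g j‖^2) ⟪g i, g j⟫ (fv i - fv j + ⟪g i, x j - x i⟫)
      hL (sq_nonneg _) (sq_nonneg _)
    intro u hu
    set η := Real.sqrt u with hηdef
    have hη : 0 < η := Real.sqrt_pos.2 hu
    have hη2 : η^2 = u := Real.sq_sqrt hu.le
    obtain ⟨C, hne, hcl, hconv, hsm, hmem⟩ := H η hη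
    set vi := (WithLp.equiv 2 (EuclideanSpace ℝ (Fin d) × ℝ)).symm (η • g i, (-1:ℝ)) with hvi
    set vj := (WithLp.equiv 2 (EuclideanSpace ℝ (Fin d) × ℝ)).symm (η • g j, (-1:ℝ)) with hvj
    set zi := (WithLp.equiv 2 (EuclideanSpace ℝ (Fin d) × ℝ)).symm (η⁻¹ • x i, fv i) with hzi
    set zj := (WithLp.equiv 2 (EuclideanSpace ℝ (Fin d) × ℝ)).symm (η⁻¹ • x j, fv j) with hzj
    have hNi : ∀ w ∈ C, ⟪vi, w - zi⟫ ≤ 0 := (hmem i).2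
    have hNj : ∀ w ∈ C, ⟪vj, w - zj⟫ ≤ 0 := (hmem j).2
    have hziC : zi ∈ C := (hmem i).1
    have hzjC : zj ∈ C := (hmem j).1
    have hvjpos : 0 < ‖vj‖ := by rw [hvj]; exact norm_v_pos hη.le (g j)
    have hvipos : 0 < ‖vi‖ := by rw [hvi]; exact norm_v_pos hη.le (g i)
    have hvj0 : vj ≠ 0 := by rw [hvj]; exact v_ne_zero hη.le (g j)
    have hfr : zj ∈ frontier C := by
      refine ⟨subset_closure hzjC, fun hint => ?_⟩
      rcases Metric.isOpen_iff.1 isOpen_interior _ hint with ⟨ε, hε, hball⟩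
      have hdist : dist (zj + (ε/(2*‖vj‖)) • vj) zj = ε/2 := by
        rw [dist_eq_norm, add_sub_cancel_left, norm_smul,
          Real.norm_of_nonneg (by positivity)]
        field_simp
      have hwmem : zj + (ε/(2*‖vj‖)) • vj ∈ ball zj ε := by
        rw [mem_ball, hdist]; linarith
      have hwC : zj + (ε/(2*‖vj‖)) • vj ∈ C := interior_subset (hball hwmem)
      have hcon := hNj _ hwC
      rw [add_sub_cancel_left, real_inner_smul_right, real_inner_self_eq_norm_sq] at hcon
      have hpos : 0 < ε/(2*‖vj‖)*‖vj‖^2 :=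
        mul_pos (div_pos hε (by linarith)) (pow_pos hvjpos 2)
      linarith [hcon, hpos]
    have hnN : ‖vj‖⁻¹ • vj ∈ normalCone C zj := by
      intro w hw
      rw [real_inner_smul_left]
      exact mul_nonpos_of_nonneg_of_nonpos (inv_nonneg.2 (norm_nonneg _)) (hNj w hw)
    have hballsub := hsm zj hfr _ hnN (norm_smul_inv_norm hvj0)
    have hwball : zj - (1/(η^2*L)) • (‖vj‖⁻¹ • vj) + (1/(η^2*L)) • (‖vi‖⁻¹ • vi) ∈
        closedBall (zj - (1/(η^2*L)) • (‖vj‖⁻¹ • vj)) (1/(η^2*L)) := by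
      rw [mem_closedBall, dist_eq_norm, add_sub_cancel_left, norm_smul, norm_smul]
      rw [norm_inv, norm_norm]
      rw [Real.norm_of_nonneg (by positivity)]
      rw [inv_mul_cancel₀ (ne_of_gt hvipos), mul_one]
    have hwC := hballsub hwball
    have hfin := hNi _ hwC
    have hexp : ⟪vi, (zj - (1/(η^2*L)) • (‖vj‖⁻¹ • vj) + (1/(η^2*L)) • (‖vi‖⁻¹ • vi)) - zi⟫
        = (⟪vi, zj⟫ - ⟪vi, zi⟫) - (1/(η^2*L))*(‖vj‖⁻¹*⟪vi, vj⟫)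
          + (1/(η^2*L))*(‖vi‖⁻¹*⟪vi, vi⟫) := by
      rw [show (zj - (1/(η^2*L)) • (‖vj‖⁻¹ • vj) + (1/(η^2*L)) • (‖vi‖⁻¹ • vi)) - zi
          = (zj - zi) - (1/(η^2*L)) • (‖vj‖⁻¹ • vj) + (1/(η^2*L)) • (‖vi‖⁻¹ • vi) by abel]
      rw [inner_add_right, inner_sub_right, inner_sub_right, real_inner_smul_right,
        real_inner_smul_right, real_inner_smul_right, real_inner_smul_right]
    have hself : ‖vi‖⁻¹*⟪vi, vi⟫ = ‖vi‖ := by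
      rw [real_inner_self_eq_norm_sq, sq, ← mul_assoc,
        inv_mul_cancel₀ (ne_of_gt hvipos), one_mul]
    have hVZj : ⟪vi, zj⟫ = ⟪g i, x j⟫ - fv j := by
      rw [hvi, hzj]; exact inner_vz_eq (ne_of_gt hη) (g i) (x j) (fv j)
    have hVZi : ⟪vi, zi⟫ = ⟪g i, x i⟫ - fv i := by
      rw [hvi, hzi]; exact inner_vz_eq (ne_of_gt hη) (g i) (x i) (fv i)
    have hVV : ⟪vi, vj⟫ = 1 + η^2*⟪g i, g j⟫ := by
      rw [hvi, hvj]; exact inner_vv_eq η (g i) (g j)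
    have hnvi : ‖vi‖ = Real.sqrt (1+η^2*‖g i‖^2) := by rw [hvi]; exact norm_v_eq hη.le (g i)
    have hnvj : ‖vj‖ = Real.sqrt (1+η^2*‖g j‖^2) := by rw [hvj]; exact norm_v_eq hη.le (g j)
    rw [hexp, hself, hVZj, hVZi, hVV] at hfin
    have hsubr : ⟪g i, x j - x i⟫ = ⟪g i, x j⟫ - ⟪g i, x i⟫ := inner_sub_right _ _ _
    rw [← hη2]
    have h3 : 1/(η^2*L) * ((1+η^2*⟪g i, g j⟫)/Real.sqrt (1+η^2*‖g j‖^2)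
          - Real.sqrt (1+η^2*‖g i‖^2))
        = (1/(η^2*L))*(‖vj‖⁻¹*(1 + η^2*⟪g i, g j⟫)) - (1/(η^2*L))*‖vi‖ := by
      rw [hnvi, hnvj, div_eq_mul_inv]
      ring
    rw [h3]
    linarith [hfin, hsubr]
  have heq : ‖g i - g j‖^2/(2*L) = -((2*⟪g i, g j⟫ - ‖g i‖^2 - ‖g j‖^2)/(2*L)) := by
    rw [hD]; ring
  linarith [hkey, heq]

set_option synthInstance.maxHeartbeats 400000 in
lemma setC_of_pc {d : ℕ} {ι : Type*} [Fintype ι] {L : ℝ} (hL : 0 < L)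
    {x g : ι → EuclideanSpace ℝ (Fin d)} {fv : ι → ℝ}
    (hp : ∀ i j, fv i + ⟪g i, x j - x i⟫ + ‖g i - g j‖^2/(2*L) ≤ fv j)
    (η : ℝ) (hη : 0 < η) :
    ∃ C : Set (WithLp 2 (EuclideanSpace ℝ (Fin d) × ℝ)), C.Nonempty ∧ IsClosed C ∧
      Convex ℝ C ∧ IsSmoothSet (η ^ 2 * L) C ∧
      ∀ i, (WithLp.equiv 2 (EuclideanSpace ℝ (Fin d) × ℝ)).symm (η⁻¹ • x i, fv i) ∈ C ∧
        (WithLp.equiv 2 (EuclideanSpace ℝ (Fin d) × ℝ)).symm (η • g i, (-1 : ℝ)) ∈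
          normalCone C
            ((WithLp.equiv 2 (EuclideanSpace ℝ (Fin d) × ℝ)).symm (η⁻¹ • x i, fv i)) := by
  rcases isEmpty_or_nonempty ι with hι | hι
  · refine ⟨Set.univ, Set.univ_nonempty, isClosed_univ, convex_univ, ?_, fun i => isEmptyElim i⟩
    intro z hz
    rw [frontier_univ] at hz
    exact absurd hz (Set.notMem_empty z)
  · have hβ : 0 < η^2*L := by positivity
    set v : ι → WithLp 2 (EuclideanSpace ℝ (Fin d) × ℝ) :=
      fun i => (WithLp.equiv 2 (EuclideanSpace ℝ (Fin d) × ℝ)).symm (η • g i, (-1:ℝ)) with hvdef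
    set z : ι → WithLp 2 (EuclideanSpace ℝ (Fin d) × ℝ) :=
      fun i => (WithLp.equiv 2 (EuclideanSpace ℝ (Fin d) × ℝ)).symm (η⁻¹ • x i, fv i) with hzdef
    have hvnorm : ∀ i, ‖v i‖ = Real.sqrt (1 + η^2*‖g i‖^2) := fun i => norm_v_eq hη.le (g i)
    have hvpos : ∀ i, 0 < ‖v i‖ := fun i => norm_v_pos hη.le (g i)
    have hv0 : ∀ i, v i ≠ 0 := fun i => v_ne_zero hη.le (g i)
    set n : ι → WithLp 2 (EuclideanSpace ℝ (Fin d) × ℝ) := fun i => ‖v i‖⁻¹ • v i with hndef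
    have hn1 : ∀ i, ‖n i‖ = 1 := fun i => norm_smul_inv_norm (hv0 i)
    set k : ι → WithLp 2 (EuclideanSpace ℝ (Fin d) × ℝ) :=
      fun i => z i - (1/(η^2*L)) • n i with hkdef
    set C := convexHull ℝ (Set.range k) + closedBall (0:WithLp 2 (EuclideanSpace ℝ (Fin d) × ℝ))
      (1/(η^2*L)) with hCdef
    have hclK : IsCompact (convexHull ℝ (Set.range k)) := (Set.finite_range k).isCompact_convexHull ℝ
    have hCcomp : IsCompact C := hclK.add (isCompact_closedBall _ _)
    have hCcl : IsClosed C := hCcomp.isClosed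
    have hCconv : Convex ℝ C := (convex_convexHull ℝ _).add (convex_closedBall _ _)
    have hkK : ∀ i, k i ∈ convexHull ℝ (Set.range k) :=
      fun i => subset_convexHull ℝ _ ⟨i, rfl⟩
    have hRn : ∀ i, (1/(η^2*L)) • n i ∈
        closedBall (0:WithLp 2 (EuclideanSpace ℝ (Fin d) × ℝ)) (1/(η^2*L)) := by
      intro i
      simp only [mem_closedBall, dist_eq_norm, sub_zero, norm_smul, hn1 i, mul_one]
      rw [Real.norm_of_nonneg (by positivity)]
    have hzC : ∀ i, z i ∈ C := by
      intro i
      have he : z i = k i + (1/(η^2*L)) • n i := by simp only [hkdef]; abel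
      rw [he]
      exact Set.add_mem_add (hkK i) (hRn i)
    have hVZ : ∀ i j, ⟪v i, z j⟫ = ⟪g i, x j⟫ - fv j := by
      intro i j
      simp only [hvdef, hzdef]
      exact inner_vz_eq (ne_of_gt hη) (g i) (x j) (fv j)
    have hVV : ∀ i j, ⟪v i, v j⟫ = 1 + η^2*⟪g i, g j⟫ := by
      intro i j
      simp only [hvdef]
      exact inner_vv_eq η (g i) (g j)
    have hpoint : ∀ i j, ⟪v i, k j⟫ ≤ ⟪v i, z i⟫ - (1/(η^2*L))*‖v i‖ := by
      intro i j
      have hA : fv i - fv j + ⟪g i, x j - x i⟫ ≤ -(‖g i - g j‖^2)/(2*L) := by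
        have hmv : -(‖g i - g j‖^2)/(2*L) = -(‖g i - g j‖^2/(2*L)) := by ring
        rw [hmv]
        linarith [hp i j]
      have hD : ‖g i - g j‖^2 = ‖g i‖^2 + ‖g j‖^2 - 2*⟪g i, g j⟫ := by
        rw [norm_sub_sq_real]; ring
      have hkey := keyIneqFwd η L (‖g i‖^2) (‖g j‖^2) ⟪g i, g j⟫ (‖g i - g j‖^2)
        (fv i - fv j + ⟪g i, x j - x i⟫) hη hL (sq_nonneg _) (sq_nonneg _)
        (sq_nonneg _) (by linarith) (by linarith)
      have h1 : ⟪v i, k j⟫ = ⟪v i, z j⟫ - (1/(η^2*L))*(‖v j‖⁻¹*⟪v i, v j⟫) := by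
        simp only [hkdef, hndef]
        rw [inner_sub_right, real_inner_smul_right, real_inner_smul_right]
      have h2 : ⟪v i, z j⟫ - ⟪v i, z i⟫ = fv i - fv j + ⟪g i, x j - x i⟫ := by
        rw [hVZ i j, hVZ i i, inner_sub_right]; ring
      have h3 : 1/(η^2*L) * ((1+η^2*⟪g i, g j⟫)/Real.sqrt (1+η^2*‖g j‖^2)
            - Real.sqrt (1+η^2*‖g i‖^2))
          = (1/(η^2*L))*(‖v j‖⁻¹*⟪v i, v j⟫) - (1/(η^2*L))*‖v i‖ := by
        rw [hvnorm i, hvnorm j, hVV i j, div_eq_mul_inv]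
        ring
      rw [h3] at hkey
      rw [h1]
      linarith [hkey, h2]
    have hnormal : ∀ i, v i ∈ normalCone C (z i) := by
      intro i w hw
      obtain ⟨aK, haK, b, hb, hab⟩ := hw
      have hab' : aK + b = w := hab
      have hhalf : ⟪v i, aK⟫ ≤ ⟪v i, z i⟫ - (1/(η^2*L))*‖v i‖ := by
        have hcm : Convex ℝ {w : WithLp 2 (EuclideanSpace ℝ (Fin d) × ℝ) |
            ⟪v i, w⟫ ≤ ⟪v i, z i⟫ - (1/(η^2*L))*‖v i‖} :=
          convex_halfSpace_le
            ⟨fun a b => inner_add_right _ _ _, fun c a => real_inner_smul_right _ _ _⟩ _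
        have hsub : Set.range k ⊆ {w : WithLp 2 (EuclideanSpace ℝ (Fin d) × ℝ) |
            ⟪v i, w⟫ ≤ ⟪v i, z i⟫ - (1/(η^2*L))*‖v i‖} := by
          rintro _ ⟨j, rfl⟩
          exact hpoint i j
        exact convexHull_min hsub hcm haK
      have hbn : ‖b‖ ≤ 1/(η^2*L) := by
        simpa [mem_closedBall, dist_eq_norm] using hb
      have hinb : ⟪v i, b⟫ ≤ ‖v i‖ * (1/(η^2*L)) :=
        le_trans (real_inner_le_norm _ _) (mul_le_mul_of_nonneg_left hbn (norm_nonneg _))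
      have hsplit : ⟪v i, w - z i⟫ = (⟪v i, aK⟫ - ⟪v i, z i⟫) + ⟪v i, b⟫ := by
        rw [← hab', show aK + b - z i = (aK - z i) + b by abel, inner_add_right,
          inner_sub_right]
      rw [hsplit]
      nlinarith [hhalf, hinb]
    have hsmC : IsSmoothSet (η^2*L) C := by
      rw [hCdef]
      exact isSmoothSet_add_closedBall _ hβ (by rw [← hCdef]; exact hCcl)
    exact ⟨C, ⟨z (Classical.arbitrary ι), hzC _⟩, hCcl, hCconv, hsmC,
      fun i => ⟨hzC i, hnormal i⟩⟩

/-- Smooth function interpolation via smooth set interpolation at every scale: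
`(x_i, g_i, f_i)` is `F_{0,L}`-interpolable iff for every `η > 0` there is a nonempty
closed convex `(η²L)`-smooth set `C ⊆ E × ℝ` containing the points `(x_i/η, f_i)`
with `(η g_i, -1)` a normal vector there. -/
theorem smooth_interpolation_as_set_interpolation {d : ℕ} (hd : 1 ≤ d) {ι : Type*}
    [Fintype ι] (L : ℝ) (hL : 0 < L) (x g : ι → EuclideanSpace ℝ (Fin d)) (fv : ι → ℝ) :
    FInterpolable 0 L x g fv ↔
      ∀ η : ℝ, 0 < η →
        ∃ C : Set (WithLp 2 (EuclideanSpace ℝ (Fin d) × ℝ)), C.Nonempty ∧ IsClosed C ∧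
          Convex ℝ C ∧ IsSmoothSet (η ^ 2 * L) C ∧
          ∀ i, (WithLp.equiv 2 (EuclideanSpace ℝ (Fin d) × ℝ)).symm (η⁻¹ • x i, fv i) ∈ C ∧
            (WithLp.equiv 2 (EuclideanSpace ℝ (Fin d) × ℝ)).symm (η • g i, (-1 : ℝ)) ∈
              normalCone C
                ((WithLp.equiv 2 (EuclideanSpace ℝ (Fin d) × ℝ)).symm (η⁻¹ • x i, fv i)) := by
  constructor
  · intro hI η hη
    exact setC_of_pc hL (pc_of_interp hL hI) η hη
  · intro H
    rcases isEmpty_or_nonempty ι with hι | hι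
    · exact interp_of_isEmpty hL x g fv
    · exact interp_of_pc hL (pc_of_sets hL H)
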